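/- arXiv:1606.06570 — 5 statements merged into one kernel-verified Lean document; each statement's English description precedes it below -/
import Mathlib

section
/- The classes of functions implementable by one round of a circuit coincide regardless of register types: Fun_S^1 = Fun_M^1. -/
set_option linter.unusedVariables false

attribute [local instance] Classical.propDecidable

/-- Signal values: stable `zero`, `one`, and metastable `meta`. -/
inductive BM : Type
  | zero
  | one
  | metastable
  deriving DecidableEq

/-- Embedding of stable Boolean values into `BM`. -/
def BM.ofBool : Bool → BM
  | false => BM.zero
  | true => BM.one

/-- `inResM x y` means `y ∈ ResM(x)`, the set of partial resolutions of `x`. -/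
def inResM {k : ℕ} (x y : Fin k → BM) : Prop :=
  ∀ i, x i = y i ∨ x i = BM.metastable

/-- `inRes x y` means `y ∈ Res(x)`, i.e. `y` is a complete (stable) resolution of `x`. -/
def inRes {k : ℕ} (x y : Fin k → BM) : Prop :=
  inResM x y ∧ ∀ i, y i ≠ BM.metastable

/-- The complete resolutions of `x`, viewed as Boolean words. -/
def boolRes {k : ℕ} (x : Fin k → BM) : Set (Fin k → Bool) :=
  { z | ∀ i, x i = BM.ofBool (z i) ∨ x i = BM.metastable }

/-- The metastable (Kleene) extension `f_M : BM^k → BM` of a Boolean function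
`f : B^k → B`: it outputs a stable value `b` iff all complete resolutions of the
input evaluate to `b` under `f`, and `meta` otherwise. -/
noncomputable def kleene {k : ℕ} (f : (Fin k → Bool) → Bool) (x : Fin k → BM) : BM :=
  if ∀ z ∈ boolRes x, f z = false then BM.zero
  else if ∀ z ∈ boolRes x, f z = true then BM.one
  else BM.metastable

/-- Combinational logic with `m` input nodes: formulas built from inputs,
`BM`-constants (gates of indegree 0), and gates computing the metastable extension
of a Boolean function of their in-neighbors.  (A DAG evaluates exactly like the
formula obtained by unsharing, so this faithfully captures evaluation of
combinational logic DAGs.) -/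
inductive Comb (m : ℕ) : Type
  | input : Fin m → Comb m
  | const : BM → Comb m
  | gate : (j : ℕ) → ((Fin j → Bool) → Bool) → (Fin j → Comb m) → Comb m

/-- Recursive evaluation of combinational logic on input `x ∈ BM^m`. -/
noncomputable def Comb.eval {m : ℕ} (x : Fin m → BM) : Comb m → BM
  | .input i => x i
  | .const b => b
  | .gate _ f cs => kleene f (fun t => (cs t).eval x)

/-- Register types: simple, mask-0, mask-1. -/
inductive RegType : Type
  | simple
  | mask0
  | mask1
  deriving DecidableEq

/-- `regRead t b (o, b')` holds iff a register of type `t` in state `b` can be read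
with read value `o`, moving to state `b'`:  a register in a stable state yields that
state and keeps it; a simple register in state `meta` yields `meta` and stays `meta`;
a mask-`c` register in state `meta` either yields `c` staying in state `meta`, or
yields `meta` changing its state to `1 - c`. -/
def regRead : RegType → BM → BM × BM → Prop
  | _, BM.zero, p => p = (BM.zero, BM.zero)
  | _, BM.one, p => p = (BM.one, BM.one)
  | RegType.simple, BM.metastable, p => p = (BM.metastable, BM.metastable)
  | RegType.mask0, BM.metastable, p => p = (BM.zero, BM.metastable) ∨ p = (BM.metastable, BM.one)
  | RegType.mask1, BM.metastable, p => p = (BM.one, BM.metastable) ∨ p = (BM.metastable, BM.zero)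

/-- A circuit with `m` input, `k` local and `n` output registers: a type for each
register, combinational logic with `m + k` input nodes (one per non-output register)
and `k + n` output nodes (one per non-input register), and an initialization of the
non-input registers. -/
structure Circuit (m k n : ℕ) : Type where
  inType : Fin m → RegType
  locType : Fin k → RegType
  outType : Fin n → RegType
  logic : Fin (k + n) → Comb (m + k)
  init : Fin (k + n) → BM

/-- A state of a circuit: values of input, local, and output registers. -/
structure CState (m k n : ℕ) : Type where
  inp : Fin m → BM
  loc : Fin k → BM
  out : Fin n → BM

/-- A state as a word in `BM^{m+k+n}`. -/
def CState.toVec {m k n : ℕ} (s : CState m k n) : Fin (m + (k + n)) → BM :=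
  Fin.append s.inp (Fin.append s.loc s.out)

/-- Read phase: `o ∈ BM^{m+k}` are possible read values of the non-output registers
in state `s`, and `ι'` the corresponding successor states of the input registers. -/
def ReadRel {m k n : ℕ} (C : Circuit m k n) (s : CState m k n)
    (o : Fin (m + k) → BM) (ι' : Fin m → BM) : Prop :=
  (∀ i : Fin m, regRead (C.inType i) (s.inp i) (o (Fin.castAdd k i), ι' i)) ∧
  (∀ j : Fin k, ∃ st', regRead (C.locType j) (s.loc j) (o (Fin.natAdd m j), st'))

/-- Evaluation phase: `f^G` applied to the read values. -/
noncomputable def evalLogic {m k n : ℕ} (C : Circuit m k n) (o : Fin (m + k) → BM) :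
    Fin (k + n) → BM :=
  fun j => (C.logic j).eval o

/-- `Write^C(s)`: possible values written to the non-input registers. -/
def WriteSet {m k n : ℕ} (C : Circuit m k n) (s : CState m k n) :
    Set (Fin (k + n) → BM) :=
  { w | ∃ o ι', ReadRel C s o ι' ∧ inResM (evalLogic C o) w }

/-- Successor-state relation: read all non-output registers, evaluate the logic,
and write an arbitrary partial resolution of the result to the non-input registers. -/
def Succ {m k n : ℕ} (C : Circuit m k n) (s s' : CState m k n) : Prop :=
  ∃ o ι', ReadRel C s o ι' ∧ s'.inp = ι' ∧
    inResM (evalLogic C o) (Fin.append s'.loc s'.out)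

/-- `reach C r s₀ = S^C_r(s₀)`: states reachable in `r` rounds from `s₀`. -/
def reach {m k n : ℕ} (C : Circuit m k n) : ℕ → CState m k n → Set (CState m k n)
  | 0, s => {s}
  | r + 1, s => { t | ∃ u ∈ reach C r s, Succ C u t }

/-- The initial state of `C` with input `ι`. -/
def initState {m k n : ℕ} (C : Circuit m k n) (ι : Fin m → BM) : CState m k n :=
  ⟨ι, fun j => C.init (Fin.castAdd n j), fun j => C.init (Fin.natAdd k j)⟩

/-- `C_r(ι)`: possible outputs after `r` rounds on input `ι`. -/
def Cout {m k n : ℕ} (C : Circuit m k n) (r : ℕ) (ι : Fin m → BM) :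
    Set (Fin n → BM) :=
  { y | ∃ s ∈ reach C r (initState C ι), y = s.out }

/-- `r` rounds of `C` implement `f` iff `C_r(ι) ⊆ f(ι)` for all inputs `ι`. -/
def Implements {m k n : ℕ} (C : Circuit m k n) (r : ℕ)
    (f : (Fin m → BM) → Set (Fin n → BM)) : Prop :=
  ∀ ι, Cout C r ι ⊆ f ι

/-- All registers of the circuit are simple. -/
def OnlySimple {m k n : ℕ} (C : Circuit m k n) : Prop :=
  (∀ i, C.inType i = RegType.simple) ∧ (∀ j, C.locType j = RegType.simple) ∧
    (∀ j, C.outType j = RegType.simple)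

/-- `Fun_S^r`: functions implementable by `r` rounds of circuits with only simple
registers. -/
def FunS (r m n : ℕ) : Set ((Fin m → BM) → Set (Fin n → BM)) :=
  { f | ∃ k, ∃ C : Circuit m k n, OnlySimple C ∧ Implements C r f }

/-- `Fun_M^r`: functions implementable by `r` rounds of circuits with arbitrary
register types. -/
def FunM (r m n : ℕ) : Set ((Fin m → BM) → Set (Fin n → BM)) :=
  { f | ∃ k, ∃ C : Circuit m k n, Implements C r f }

/-- A pivotal sequence over `BM^N`: consecutive elements differ in exactly one bit,
and that bit is `meta` in one of the two elements. -/
def PivotalSeq {N ℓ : ℕ} (x : Fin (ℓ + 1) → Fin N → BM) : Prop :=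
  ∀ i : Fin ℓ,
    ∃ j : Fin N,
      x i.castSucc j ≠ x i.succ j ∧
      (x i.castSucc j = BM.metastable ∨ x i.succ j = BM.metastable) ∧
      ∀ j' : Fin N, x i.castSucc j' ≠ x i.succ j' → j' = j

/-- A function `f : BM^m → Pow(BM^n)` is natural iff it is bit-wise and closed
(a product of component functions each taking values in `{{0}, {1}, BM}`)
and specific (stabilizing the input restricts the output). -/
def IsNatural {m n : ℕ} (f : (Fin m → BM) → Set (Fin n → BM)) : Prop :=
  (∃ g : Fin n → (Fin m → BM) → Set BM,
      (∀ i x, g i x = {BM.zero} ∨ g i x = {BM.one} ∨ g i x = (Set.univ : Set BM)) ∧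
      (∀ x, f x = { y | ∀ i, y i ∈ g i x })) ∧
  (∀ x y, inRes x y → f y ⊆ f x)

/-- The `i`-th component of the metastable closure of `f : B^m → B^n`. -/
noncomputable def mclosureC {m n : ℕ} (f : (Fin m → Bool) → Fin n → Bool)
    (x : Fin m → BM) (i : Fin n) : Set BM :=
  if ∀ z ∈ boolRes x, f z i = false then {BM.zero}
  else if ∀ z ∈ boolRes x, f z i = true then {BM.one}
  else Set.univ

/-- The metastable closure `[f]_M : BM^m → Pow(BM^n)` of `f : B^m → B^n`. -/
noncomputable def mclosure {m n : ℕ} (f : (Fin m → Bool) → Fin n → Bool)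
    (x : Fin m → BM) : Set (Fin n → BM) :=
  { y | ∀ i, y i ∈ mclosureC f x i }

/-- Any read value produced by a simple register is also producible by a register of
any type (with a possibly different successor state). -/
lemma readSimpleToAny (t : RegType) (b v ι' : BM)
    (h : regRead RegType.simple b (v, ι')) : ∃ st', regRead t b (v, st') := by
  cases b <;> cases t <;> simp_all [regRead] <;>
    first
      | exact ⟨ι', rfl⟩
      | (cases h; exact ⟨BM.one, Or.inr rfl⟩)
      | (cases h; exact ⟨BM.zero, Or.inr rfl⟩)

/-- `Fun_S^1 = Fun_M^1`: the functions implementable by one round of a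
circuit do not depend on the available register types. -/
theorem funS_one_eq_funM_one (m n : ℕ) : FunS 1 m n = FunM 1 m n := by
  ext f
  constructor
  · rintro ⟨k, C, _, hImp⟩
    exact ⟨k, C, hImp⟩
  · rintro ⟨k, C, hImp⟩
    refine ⟨k, ⟨fun _ => RegType.simple, fun _ => RegType.simple, fun _ => RegType.simple,
      C.logic, C.init⟩, ⟨fun _ => rfl, fun _ => rfl, fun _ => rfl⟩, ?_⟩
    intro ι y hy
    apply hImp ι
    obtain ⟨s, hs, hyeq⟩ := hy
    obtain ⟨u, hu, hsucc⟩ := hs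
    have hu' : u = initState _ ι := hu
    subst hu'
    obtain ⟨o, ι', ⟨hin, hloc⟩, hinp, hres⟩ := hsucc
    -- choose successor states for input registers of the original types
    have hin' : ∀ i : Fin m, ∃ st',
        regRead (C.inType i) (ι i) (o (Fin.castAdd k i), st') := by
      intro i
      exact readSimpleToAny _ _ _ _ (hin i)
    choose ι'' hι'' using hin'
    refine ⟨⟨ι'', s.loc, s.out⟩, ⟨initState C ι, rfl, ?_⟩, hyeq⟩
    refine ⟨o, ι'', ⟨hι'', ?_⟩, rfl, hres⟩
    intro j
    obtain ⟨st', hst'⟩ := hloc j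
    exact readSimpleToAny _ _ _ _ hst'
end

section
/- For any circuit C with m input and n output registers, the one-round behavior has a product structure: there exist component functions g_0, …, g_{n−1} : BM^m → {{0}, {1}, BM} such that C_1(ι) = g_0(ι) × … × g_{n−1}(ι) for every input ι ∈ BM^m. -/
set_option linter.unusedVariables false

attribute [local instance] Classical.propDecidable

/-- Any possible read of a register resolves its state. -/
lemma regRead_resolve (t : RegType) (b : BM) (p : BM × BM) (h : regRead t b p) :
    b = p.1 ∨ b = BM.metastable := by
  cases b with
  | zero => cases t <;> simp_all [regRead]
  | one => cases t <;> simp_all [regRead]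
  | metastable => exact Or.inr rfl

/-- Reading the state value itself is always a possible read. -/
lemma regRead_self (t : RegType) (b : BM) : ∃ st', regRead t b (b, st') := by
  cases t <;> cases b
  · exact ⟨BM.zero, rfl⟩
  · exact ⟨BM.one, rfl⟩
  · exact ⟨BM.metastable, rfl⟩
  · exact ⟨BM.zero, rfl⟩
  · exact ⟨BM.one, rfl⟩
  · exact ⟨BM.one, Or.inr rfl⟩
  · exact ⟨BM.zero, rfl⟩
  · exact ⟨BM.one, rfl⟩
  · exact ⟨BM.zero, Or.inr rfl⟩

lemma boolRes_nonempty {k : ℕ} (x : Fin k → BM) : ∃ z, z ∈ boolRes x := by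
  refine ⟨fun i => if x i = BM.one then true else false, fun i => ?_⟩
  cases h : x i <;> simp [BM.ofBool, h]

lemma boolRes_mono {k : ℕ} {x x' : Fin k → BM} (h : inResM x x') :
    boolRes x' ⊆ boolRes x := by
  intro z hz i
  rcases h i with h1 | h1
  · rcases hz i with h2 | h2
    · exact Or.inl (h1.trans h2)
    · exact Or.inr (h1.trans h2)
  · exact Or.inr h1

lemma kleene_mono {k : ℕ} (f : (Fin k → Bool) → Bool) {x x' : Fin k → BM}
    (h : inResM x x') : kleene f x = kleene f x' ∨ kleene f x = BM.metastable := by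
  unfold kleene
  by_cases h0 : ∀ z ∈ boolRes x, f z = false
  · have h0' : ∀ z ∈ boolRes x', f z = false := fun z hz => h0 z (boolRes_mono h hz)
    rw [if_pos h0, if_pos h0']
    exact Or.inl rfl
  · by_cases h1 : ∀ z ∈ boolRes x, f z = true
    · have h1' : ∀ z ∈ boolRes x', f z = true := fun z hz => h1 z (boolRes_mono h hz)
      have h0' : ¬ ∀ z ∈ boolRes x', f z = false := by
        obtain ⟨z, hz⟩ := boolRes_nonempty x'
        intro hc
        have := (h1' z hz).symm.trans (hc z hz)
        simp at this
      rw [if_neg h0, if_pos h1, if_neg h0', if_pos h1']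
      exact Or.inl rfl
    · rw [if_neg h0, if_neg h1]
      exact Or.inr rfl

lemma eval_mono {m : ℕ} {x x' : Fin m → BM} (h : inResM x x') (c : Comb m) :
    c.eval x = c.eval x' ∨ c.eval x = BM.metastable := by
  induction c with
  | input i => simpa [Comb.eval] using h i
  | const b => simp [Comb.eval]
  | gate j f cs ih =>
      simp only [Comb.eval]
      exact kleene_mono f (fun t => ih t)

/-- The "most metastable" read values: the register states themselves. -/
def ostar {m k n : ℕ} (C : Circuit m k n) (ι : Fin m → BM) : Fin (m + k) → BM :=
  Fin.append ι (fun j => C.init (Fin.castAdd n j))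

lemma readRel_resolve {m k n : ℕ} (C : Circuit m k n) (ι : Fin m → BM)
    {o : Fin (m + k) → BM} {ι' : Fin m → BM}
    (h : ReadRel C (initState C ι) o ι') : inResM (ostar C ι) o := by
  intro j
  refine Fin.addCases (fun i => ?_) (fun i => ?_) j
  · have := regRead_resolve _ _ _ (h.1 i)
    simpa [ostar, Fin.append_left, initState] using this
  · obtain ⟨st', hst⟩ := h.2 i
    have := regRead_resolve _ _ _ hst
    simpa [ostar, Fin.append_right, initState] using this

/-- the one-round behavior of any circuit has a product structure:
`C_1 = g_0 × ⋯ × g_{n-1}` with `g_i : BM^m → {{0}, {1}, BM}`. -/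
theorem cout_one_product_structure {m k n : ℕ} (C : Circuit m k n) :
    ∃ g : Fin n → (Fin m → BM) → Set BM,
      (∀ i ι, g i ι = {BM.zero} ∨ g i ι = {BM.one} ∨ g i ι = (Set.univ : Set BM)) ∧
      ∀ ι, Cout C 1 ι = { y | ∀ i, y i ∈ g i ι } := by
  classical
  set v : (Fin m → BM) → Fin (k + n) → BM :=
    fun ι => evalLogic C (ostar C ι) with hv
  refine ⟨fun i ι => { y | v ι (Fin.natAdd k i) = y ∨ v ι (Fin.natAdd k i) = BM.metastable },
    ?_, ?_⟩
  · intro i ι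
    cases h : v ι (Fin.natAdd k i) with
    | zero => left; ext y; simp [h, eq_comm]
    | one => right; left; ext y; simp [h, eq_comm]
    | metastable => right; right; ext y; simp [h]
  · intro ι
    ext y
    simp only [Cout, reach, Set.mem_singleton_iff, Set.mem_setOf_eq]
    constructor
    · rintro ⟨s, ⟨u, rfl, hsucc⟩, rfl⟩
      obtain ⟨o, ι', hread, hinp, hres⟩ := hsucc
      intro i
      have hstar : inResM (ostar C ι) o := readRel_resolve C ι hread
      have hmono := eval_mono hstar (C.logic (Fin.natAdd k i))
      have hres' := hres (Fin.natAdd k i)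
      rw [Fin.append_right] at hres'
      rcases hmono with hm | hm
      · rcases hres' with hr | hr
        · exact Or.inl (by rw [hv]; simpa [evalLogic] using hm.trans hr)
        · exact Or.inr (by rw [hv]; simpa [evalLogic] using hm.trans hr)
      · exact Or.inr (by rw [hv]; simpa [evalLogic] using hm)
    · intro hy
      have hι' : ∀ i : Fin m, ∃ st', regRead (C.inType i) (ι i) (ι i, st') :=
        fun i => regRead_self _ _
      choose ι' hι' using hι'
      refine ⟨⟨ι', fun j => v ι (Fin.castAdd n j), y⟩,
        ⟨initState C ι, rfl, ⟨ostar C ι, ι', ⟨?_, ?_⟩, rfl, ?_⟩⟩, rfl⟩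
      · intro i
        have : ostar C ι (Fin.castAdd k i) = ι i := Fin.append_left _ _ _
        rw [this]
        exact hι' i
      · intro j
        have : ostar C ι (Fin.natAdd m j) = C.init (Fin.castAdd n j) :=
          Fin.append_right _ _ _
        rw [this]
        exact regRead_self _ _
      · intro j
        refine Fin.addCases (fun i => ?_) (fun i => ?_) j
        · rw [Fin.append_left]
          exact Or.inl rfl
        · rw [Fin.append_right]
          exact hy i
end

section
/- For any circuit C and inputs ι, ι' ∈ BM^m, if ι' ∈ ResM(ι), then C_1(ι') ⊆ C_1(ι); i.e., partially stabilizing the input restricts the set of possible one-round outputs. -/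
set_option linter.unusedVariables false

attribute [local instance] Classical.propDecidable

lemma inResM_trans {k : ℕ} {a b c : Fin k → BM} (h1 : inResM a b) (h2 : inResM b c) :
    inResM a c := by
  intro i
  rcases h1 i with h | h
  · rcases h2 i with h' | h'
    · exact Or.inl (h.trans h')
    · exact Or.inr (h.trans h')
  · exact Or.inr h

lemma read_sim (t : RegType) {a b o st : BM} (hab : a = b ∨ a = BM.metastable)
    (hr : regRead t b (o, st)) :
    ∃ o' st', regRead t a (o', st') ∧ (o' = o ∨ o' = BM.metastable) := by
  rcases hab with rfl | rfl
  · exact ⟨o, st, hr, Or.inl rfl⟩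
  · cases t
    · exact ⟨BM.metastable, BM.metastable, rfl, Or.inr rfl⟩
    · cases b
      · simp only [regRead, Prod.mk.injEq] at hr
        exact ⟨BM.zero, BM.metastable, Or.inl rfl, Or.inl hr.1.symm⟩
      · exact ⟨BM.metastable, BM.one, Or.inr rfl, Or.inr rfl⟩
      · exact ⟨o, st, hr, Or.inl rfl⟩
    · cases b
      · exact ⟨BM.metastable, BM.zero, Or.inr rfl, Or.inr rfl⟩
      · simp only [regRead, Prod.mk.injEq] at hr
        exact ⟨BM.one, BM.metastable, Or.inl rfl, Or.inl hr.1.symm⟩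
      · exact ⟨o, st, hr, Or.inl rfl⟩

/-- for any circuit `C`, if `ι' ∈ ResM(ι)` then `C_1(ι') ⊆ C_1(ι)`:
partially stabilizing the input restricts the possible one-round outputs. -/
theorem cout_one_monotone {m k n : ℕ} (C : Circuit m k n) (ι ι' : Fin m → BM)
    (h : inResM ι ι') :
    Cout C 1 ι' ⊆ Cout C 1 ι := by
  rintro y ⟨s, hs, rfl⟩
  obtain ⟨u, hu, hsucc⟩ := hs
  simp only [reach, Set.mem_singleton_iff] at hu
  subst hu
  obtain ⟨o, ι'', ⟨hin, hloc⟩, hinp, hw⟩ := hsucc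
  -- build reads from initState C ι
  have hchoice : ∀ i : Fin m, ∃ o' st',
      regRead (C.inType i) (ι i) (o', st') ∧ (o' = o (Fin.castAdd k i) ∨ o' = BM.metastable) := by
    intro i
    exact read_sim (C.inType i) (h i) (hin i)
  choose o1 st1 hreg ho1 using hchoice
  set o'' : Fin (m + k) → BM :=
    Fin.addCases o1 (fun j => o (Fin.natAdd m j)) with ho''
  have hResoo : inResM o'' o := by
    intro p
    refine Fin.addCases (fun i => ?_) (fun j => ?_) p
    · simpa [ho''] using ho1 i
    · simp [ho'']
  have hevalR : inResM (evalLogic C o'') (Fin.append s.loc s.out) := by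
    refine inResM_trans (fun j => ?_) hw
    exact eval_mono hResoo (C.logic j)
  refine ⟨⟨st1, s.loc, s.out⟩, ⟨initState C ι, by simp [reach], ?_⟩, rfl⟩
  refine ⟨o'', st1, ⟨fun i => ?_, fun j => ?_⟩, rfl, hevalR⟩
  · simpa [ho'', initState] using hreg i
  · obtain ⟨st', hst'⟩ := hloc j
    exact ⟨st', by simpa [ho'', initState] using hst'⟩
end

section
/- Metastability cannot be resolved: there exists no circuit that implements the function f : BM → Pow(BM) with f(M) = {0, 1} and f(x) = {x} for x ∈ {0, 1}. -/
set_option linter.unusedVariables false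

attribute [local instance] Classical.propDecidable

/-- The metastability resolver specification: stable inputs are copied, a metastable
input may produce any stable output. -/
def resolveSpec : (Fin 1 → BM) → Set (Fin 1 → BM) := fun x =>
  if x 0 = BM.metastable then {fun _ => BM.zero, fun _ => BM.one} else {x}


namespace NoResolve

/-! ### Basic order on `BM` and monotonicity of Kleene evaluation -/

def le (x y : BM) : Prop := x = BM.metastable ∨ x = y

lemma le_refl (x : BM) : le x x := Or.inr rfl

def leF {N : ℕ} (x y : Fin N → BM) : Prop := ∀ i, le (x i) (y i)

lemma leF_refl {N : ℕ} (x : Fin N → BM) : leF x x := fun _ => le_refl _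

lemma boolRes_anti {N : ℕ} {x y : Fin N → BM} (h : leF x y) : boolRes y ⊆ boolRes x := by
  intro z hz i
  rcases h i with h' | h'
  · exact Or.inr h'
  · rw [h']; exact hz i

lemma boolRes_nonempty {N : ℕ} (x : Fin N → BM) : ∃ z, z ∈ boolRes x := by
  refine ⟨fun i => match x i with | BM.one => true | _ => false, fun i => ?_⟩
  cases hx : x i <;> simp [hx, BM.ofBool]

lemma kleene_mono {N : ℕ} (f : (Fin N → Bool) → Bool) {x y : Fin N → BM} (h : leF x y) :
    le (kleene f x) (kleene f y) := by
  unfold kleene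
  by_cases h0 : ∀ z ∈ boolRes x, f z = false
  · have h0' : ∀ z ∈ boolRes y, f z = false := fun z hz => h0 z (boolRes_anti h hz)
    rw [if_pos h0, if_pos h0']; exact le_refl _
  · rw [if_neg h0]
    by_cases h1 : ∀ z ∈ boolRes x, f z = true
    · have h1' : ∀ z ∈ boolRes y, f z = true := fun z hz => h1 z (boolRes_anti h hz)
      have h0' : ¬ ∀ z ∈ boolRes y, f z = false := by
        obtain ⟨z, hz⟩ := boolRes_nonempty y
        intro hc
        have hf := hc z hz
        have ht := h1' z hz
        rw [ht] at hf
        exact Bool.noConfusion hf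
      rw [if_pos h1, if_neg h0', if_pos h1']; exact le_refl _
    · rw [if_neg h1]; exact Or.inl rfl

lemma eval_mono {N : ℕ} {x y : Fin N → BM} (h : leF x y) :
    ∀ c : Comb N, le (Comb.eval x c) (Comb.eval y c)
  | .input i => h i
  | .const b => le_refl b
  | .gate _ f cs => kleene_mono f (fun t => eval_mono h (cs t))

lemma inResM_refl {N : ℕ} (x : Fin N → BM) : inResM x x := fun _ => Or.inl rfl

lemma inResM_of_le {N : ℕ} {v v' w : Fin N → BM} (h : leF v' v) (hw : inResM v w) :
    inResM v' w := by
  intro i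
  rcases h i with h' | h'
  · exact Or.inr h'
  · rw [h']; exact hw i

lemma inResM_of_leF {N : ℕ} {v w : Fin N → BM} (h : leF v w) : inResM v w :=
  fun i => (h i).symm

/-! ### Register read choices -/

def minPair : RegType → BM → BM × BM
  | _, BM.zero => (BM.zero, BM.zero)
  | _, BM.one => (BM.one, BM.one)
  | RegType.simple, BM.metastable => (BM.metastable, BM.metastable)
  | RegType.mask0, BM.metastable => (BM.metastable, BM.one)
  | RegType.mask1, BM.metastable => (BM.metastable, BM.zero)

lemma regRead_minPair (τ : RegType) (x : BM) : regRead τ x (minPair τ x) := by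
  cases x <;> cases τ <;> simp [minPair, regRead]

lemma minPair_fst_le {τ : RegType} {x : BM} {p : BM × BM} (h : regRead τ x p) :
    le (minPair τ x).1 p.1 := by
  cases x
  · cases τ <;> (cases h; exact le_refl _)
  · cases τ <;> (cases h; exact le_refl _)
  · cases τ <;> exact Or.inl rfl

lemma minPair_snd {τ : RegType} {x : BM} {p : BM × BM} (h : regRead τ x p) :
    p.2 = (minPair τ x).2 ∨ p.2 = BM.metastable := by
  cases x
  · cases τ <;> (cases h; exact Or.inl rfl)
  · cases τ <;> (cases h; exact Or.inl rfl)
  · cases τ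
    · cases h; exact Or.inr rfl
    · rcases h with rfl | rfl
      · exact Or.inr rfl
      · exact Or.inl rfl
    · rcases h with rfl | rfl
      · exact Or.inr rfl
      · exact Or.inl rfl

def pickPair : RegType → BM → BM × BM
  | RegType.simple, _ => (BM.metastable, BM.metastable)
  | RegType.mask0, BM.zero => (BM.zero, BM.metastable)
  | RegType.mask0, _ => (BM.metastable, BM.one)
  | RegType.mask1, BM.one => (BM.one, BM.metastable)
  | RegType.mask1, _ => (BM.metastable, BM.zero)

lemma regRead_pickPair (τ : RegType) (b : BM) : regRead τ BM.metastable (pickPair τ b) := by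
  cases τ <;> cases b <;> simp [pickPair, regRead]

lemma pickPair_fst_le (τ : RegType) (b : BM) : le (pickPair τ b).1 (minPair τ b).1 := by
  cases τ <;> cases b <;> simp [pickPair, minPair, le]

lemma pickPair_snd (τ : RegType) (b : BM) :
    (pickPair τ b).2 = (minPair τ b).2 ∨ (pickPair τ b).2 = BM.metastable := by
  cases τ <;> cases b <;> simp [pickPair, minPair]

/-! ### States, splitting writes -/

variable {k : ℕ}

def split (w : Fin (k + 1) → BM) : (Fin k → BM) × (Fin 1 → BM) :=
  (fun j => w (Fin.castAdd 1 j), fun j => w (Fin.natAdd k j))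

lemma append_split (w : Fin (k + 1) → BM) :
    Fin.append (split w).1 (split w).2 = w := by
  funext i
  refine Fin.addCases (fun j => ?_) (fun j => ?_) i
  · exact Fin.append_left _ _ j
  · exact Fin.append_right _ _ j

lemma split_append (a : Fin k → BM) (b : Fin 1 → BM) : split (Fin.append a b) = (a, b) := by
  unfold split
  refine Prod.ext ?_ ?_
  · funext j; exact Fin.append_left a b j
  · funext j; exact Fin.append_right a b j

def mk (ι : Fin 1 → BM) (w : Fin (k + 1) → BM) : CState 1 k 1 :=
  ⟨ι, (split w).1, (split w).2⟩

lemma fun1_ext {f g : Fin 1 → BM} (h : f 0 = g 0) : f = g := by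
  funext i
  have : i = 0 := Subsingleton.elim i 0
  rw [this]; exact h

lemma cext {u v : CState 1 k 1} (h1 : u.inp = v.inp) (h2 : u.loc = v.loc)
    (h3 : u.out = v.out) : u = v := by
  cases u; cases v
  cases h1; cases h2; cases h3; rfl

lemma state_eq_mk (s : CState 1 k 1) : s = mk s.inp (Fin.append s.loc s.out) := by
  refine cext rfl ?_ ?_
  · show s.loc = (split (Fin.append s.loc s.out)).1
    rw [split_append]
  · show s.out = (split (Fin.append s.loc s.out)).2
    rw [split_append]

variable (C : Circuit 1 k 1)

lemma succ_mk {s : CState 1 k 1} {o : Fin (1 + k) → BM} {ι' : Fin 1 → BM}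
    (hr : ReadRel C s o ι') {w : Fin (k + 1) → BM} (hw : inResM (evalLogic C o) w) :
    Succ C s (mk ι' w) := by
  refine ⟨o, ι', hr, rfl, ?_⟩
  show inResM (evalLogic C o) (Fin.append (split w).1 (split w).2)
  rw [append_split]; exact hw

/-! ### Canonical minimal read and successor -/

def minO (s : CState 1 k 1) : Fin (1 + k) → BM :=
  Fin.append (fun i => (minPair (C.inType i) (s.inp i)).1)
             (fun j => (minPair (C.locType j) (s.loc j)).1)

def minI (s : CState 1 k 1) : Fin 1 → BM := fun i => (minPair (C.inType i) (s.inp i)).2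

lemma readRel_min (s : CState 1 k 1) : ReadRel C s (minO C s) (minI C s) := by
  constructor
  · intro i
    show regRead _ _ (minO C s (Fin.castAdd k i), (minPair (C.inType i) (s.inp i)).2)
    have h : minO C s (Fin.castAdd k i) = (minPair (C.inType i) (s.inp i)).1 :=
      Fin.append_left _ _ i
    rw [h]
    exact regRead_minPair _ _
  · intro j
    refine ⟨(minPair (C.locType j) (s.loc j)).2, ?_⟩
    have h : minO C s (Fin.natAdd 1 j) = (minPair (C.locType j) (s.loc j)).1 :=
      Fin.append_right _ _ j
    rw [h]
    exact regRead_minPair _ _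

lemma minO_le {s : CState 1 k 1} {o : Fin (1 + k) → BM} {ι' : Fin 1 → BM}
    (h : ReadRel C s o ι') : leF (minO C s) o := by
  intro j
  refine Fin.addCases (motive := fun j => le (minO C s j) (o j)) (fun i => ?_) (fun j' => ?_) j
  · have he : minO C s (Fin.castAdd k i) = (minPair (C.inType i) (s.inp i)).1 :=
      Fin.append_left _ _ i
    rw [he]
    exact minPair_fst_le (h.1 i)
  · have he : minO C s (Fin.natAdd 1 j') = (minPair (C.locType j') (s.loc j')).1 :=
      Fin.append_right _ _ j'
    rw [he]
    obtain ⟨st', hst⟩ := h.2 j'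
    exact minPair_fst_le hst

noncomputable def minW (s : CState 1 k 1) : Fin (k + 1) → BM := evalLogic C (minO C s)

noncomputable def minSucc (s : CState 1 k 1) : CState 1 k 1 := mk (minI C s) (minW C s)

lemma succ_minSucc (s : CState 1 k 1) : Succ C s (minSucc C s) :=
  succ_mk C (readRel_min C s) (inResM_refl _)

lemma minSucc_congr {u v : CState 1 k 1} (h1 : u.inp = v.inp) (h2 : u.loc = v.loc) :
    minSucc C u = minSucc C v := by
  unfold minSucc minW minI minO
  rw [h1, h2]

lemma evalLogic_mono {o o' : Fin (1 + k) → BM} (h : leF o o') :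
    leF (evalLogic C o) (evalLogic C o') := fun j => eval_mono h (C.logic j)

/-! ### Adjacency and connectivity -/

def A (u v : CState 1 k 1) : Prop :=
  u = v
  ∨ ((u.inp 0 = BM.metastable ∨ v.inp 0 = BM.metastable) ∧ u.loc = v.loc ∧ u.out = v.out)
  ∨ (∃ j, (u.loc j = BM.metastable ∨ v.loc j = BM.metastable) ∧ (∀ j', j' ≠ j → u.loc j' = v.loc j')
        ∧ u.inp = v.inp ∧ u.out = v.out)
  ∨ ((u.out 0 = BM.metastable ∨ v.out 0 = BM.metastable) ∧ u.inp = v.inp ∧ u.loc = v.loc)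

lemma A_symm {u v : CState 1 k 1} (h : A u v) : A v u := by
  rcases h with rfl | ⟨h1, h2, h3⟩ | ⟨j, h1, h2, h3, h4⟩ | ⟨h1, h2, h3⟩
  · exact Or.inl rfl
  · exact Or.inr (Or.inl ⟨h1.symm, h2.symm, h3.symm⟩)
  · exact Or.inr (Or.inr (Or.inl ⟨j, h1.symm, fun j' hj => (h2 j' hj).symm, h3.symm, h4.symm⟩))
  · exact Or.inr (Or.inr (Or.inr ⟨h1.symm, h2.symm, h3.symm⟩))

def Conn (R : Set (CState 1 k 1)) : CState 1 k 1 → CState 1 k 1 → Prop :=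
  Relation.ReflTransGen (fun u v => v ∈ R ∧ A u v)

lemma conn_mono {R R' : Set (CState 1 k 1)} (h : R ⊆ R') {a b : CState 1 k 1}
    (hc : Conn R a b) : Conn R' a b :=
  Relation.ReflTransGen.mono (r := fun u v => v ∈ R ∧ A u v) (p := fun u v => v ∈ R' ∧ A u v)
    (fun _ _ hv => ⟨h hv.1, hv.2⟩) _ _ hc

lemma conn_mem {R : Set (CState 1 k 1)} {a b : CState 1 k 1} (h : Conn R a b)
    (ha : a ∈ R) : b ∈ R := by
  induction h with
  | refl => exact ha
  | tail _ h' _ => exact h'.1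

lemma conn_single {R : Set (CState 1 k 1)} {a b : CState 1 k 1} (hb : b ∈ R) (hA : A a b) :
    Conn R a b := Relation.ReflTransGen.single ⟨hb, hA⟩

lemma conn_symm {R : Set (CState 1 k 1)} {a b : CState 1 k 1} (h : Conn R a b)
    (ha : a ∈ R) : Conn R b a := by
  induction h with
  | refl => exact Relation.ReflTransGen.refl
  | @tail c b hac hcb ih =>
      exact Relation.ReflTransGen.trans
        (conn_single (conn_mem hac ha) (A_symm hcb.2)) ih

lemma chainN {R : Set (CState 1 k 1)} (g : ℕ → CState 1 k 1) :
    ∀ N : ℕ, (∀ t, t < N → g (t + 1) ∈ R ∧ A (g t) (g (t + 1))) → Conn R (g 0) (g N)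
  | 0, _ => Relation.ReflTransGen.refl
  | N + 1, h =>
      Relation.ReflTransGen.tail
        (chainN g N (fun t ht => h t (Nat.lt_succ_of_lt ht)))
        (h N (Nat.lt_succ_self N))

lemma if_step {α : Type} (v w : α) (a t : ℕ) (h : a ≠ t) :
    (if a < t then v else w) = (if a < t + 1 then v else w) := by
  rcases Nat.lt_or_ge a t with h' | h'
  · rw [if_pos h', if_pos (Nat.lt_succ_of_lt h')]
  · rw [if_neg (Nat.not_lt.mpr h'), if_neg (by omega)]

def hyb (v w : Fin (k + 1) → BM) (t : ℕ) : Fin (k + 1) → BM :=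
  fun j => if (j : ℕ) < t then v j else w j

lemma hyb_zero (v w : Fin (k + 1) → BM) : hyb v w 0 = w :=
  funext fun j => if_neg (Nat.not_lt_zero _)

lemma hyb_top (v w : Fin (k + 1) → BM) : hyb v w (k + 1) = v :=
  funext fun j => if_pos j.isLt

lemma hyb_res {v w : Fin (k + 1) → BM} (hw : inResM v w) (t : ℕ) : inResM v (hyb v w t) := by
  intro j
  unfold hyb
  split
  · exact Or.inl rfl
  · exact hw j

lemma hybrid_conn {R : Set (CState 1 k 1)} (ι : Fin 1 → BM) {v w : Fin (k + 1) → BM}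
    (hw : inResM v w) (hmem : ∀ w', inResM v w' → mk ι w' ∈ R) :
    Conn R (mk ι w) (mk ι v) := by
  have hstep : ∀ t, t < k + 1 → mk ι (hyb v w (t + 1)) ∈ R ∧
      A (mk ι (hyb v w t)) (mk ι (hyb v w (t + 1))) := by
    intro t ht
    refine ⟨hmem _ (hyb_res hw (t + 1)), ?_⟩
    by_cases hc : w ⟨t, ht⟩ = v ⟨t, ht⟩
    · left
      have heq : hyb v w t = hyb v w (t + 1) := by
        funext j
        unfold hyb
        by_cases hj : (j : ℕ) = t
        · have hj' : j = (⟨t, ht⟩ : Fin (k + 1)) := Fin.ext hj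
          rw [hj', if_neg (by omega), if_pos (by omega), hc]
        · exact if_step _ _ _ _ hj
      rw [heq]
    · have hv : v ⟨t, ht⟩ = BM.metastable := by
        rcases hw ⟨t, ht⟩ with h | h
        · exact absurd h.symm hc
        · exact h
      rcases Nat.lt_or_ge t k with htk | htk
      · right; right; left
        refine ⟨⟨t, htk⟩, Or.inr ?_, ?_, rfl, ?_⟩
        · show hyb v w (t + 1) (Fin.castAdd 1 ⟨t, htk⟩) = BM.metastable
          have hcast : (Fin.castAdd 1 (⟨t, htk⟩ : Fin k)) = (⟨t, ht⟩ : Fin (k + 1)) := rfl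
          rw [hcast]
          show (if t < t + 1 then v ⟨t, ht⟩ else w ⟨t, ht⟩) = BM.metastable
          rw [if_pos (Nat.lt_succ_self t)]
          exact hv
        · intro j' hj'
          show hyb v w t (Fin.castAdd 1 j') = hyb v w (t + 1) (Fin.castAdd 1 j')
          exact if_step _ _ _ _ (fun h => hj' (Fin.ext h))
        · funext j
          show hyb v w t (Fin.natAdd k j) = hyb v w (t + 1) (Fin.natAdd k j)
          refine if_step _ _ _ _ ?_
          show k + (j : ℕ) ≠ t
          omega
      · right; right; right
        have hteq : t = k := by omega
        subst hteq
        refine ⟨Or.inr ?_, rfl, ?_⟩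
        · show hyb v w (t + 1) (Fin.natAdd t 0) = BM.metastable
          have hcast : (Fin.natAdd t (0 : Fin 1)) = (⟨t, ht⟩ : Fin (t + 1)) := by
            apply Fin.ext
            show t + 0 = t
            omega
          rw [hcast]
          show (if t < t + 1 then v ⟨t, ht⟩ else w ⟨t, ht⟩) = BM.metastable
          rw [if_pos (Nat.lt_succ_self t)]
          exact hv
        · funext j
          show hyb v w t (Fin.castAdd 1 j) = hyb v w (t + 1) (Fin.castAdd 1 j)
          refine if_step _ _ _ _ ?_
          show (j : ℕ) ≠ t
          omega
  have hchain := chainN (fun t => mk ι (hyb v w t)) (k + 1) hstep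
  rw [hyb_zero, hyb_top] at hchain
  exact hchain

/-! ### Any successor connects to the minimal successor -/

lemma conn_to_min {s x : CState 1 k 1} (hx : Succ C s x) :
    Conn {t | Succ C s t} x (minSucc C s) := by
  obtain ⟨o, ι', hr, hinp, hres⟩ := hx
  have hxeq : x = mk ι' (Fin.append x.loc x.out) := by
    rw [← hinp]; exact state_eq_mk x
  rw [hxeq]
  set w := Fin.append x.loc x.out with hwdef
  -- step 1: to (mk (minI C s) w)
  have hle1 : leF (minO C s) o := minO_le C hr
  have hwres : inResM (minW C s) w :=
    inResM_of_le (evalLogic_mono C hle1) hres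
  -- membership of intermediate state
  have hmid : Succ C s (mk (minI C s) w) := by
    refine succ_mk C (o := Fin.append (fun i => (minPair (C.inType i) (s.inp i)).1)
      (fun j => o (Fin.natAdd 1 j))) ?_ ?_
    · constructor
      · intro i
        have h1 : Fin.append (fun i => (minPair (C.inType i) (s.inp i)).1)
            (fun j => o (Fin.natAdd 1 j)) (Fin.castAdd k i)
            = (minPair (C.inType i) (s.inp i)).1 := Fin.append_left _ _ i
        rw [h1]
        exact regRead_minPair _ _
      · intro j
        have h1 : Fin.append (fun i => (minPair (C.inType i) (s.inp i)).1)
            (fun j => o (Fin.natAdd 1 j)) (Fin.natAdd 1 j) = o (Fin.natAdd 1 j) :=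
          Fin.append_right _ _ j
        rw [h1]
        exact hr.2 j
    · refine inResM_of_le (evalLogic_mono C ?_) hres
      intro j
      refine Fin.addCases (motive := fun j => le (Fin.append (fun i => (minPair (C.inType i) (s.inp i)).1)
        (fun j => o (Fin.natAdd 1 j)) j) (o j)) (fun i => ?_) (fun j' => ?_) j
      · have h1 : Fin.append (fun i => (minPair (C.inType i) (s.inp i)).1)
            (fun j => o (Fin.natAdd 1 j)) (Fin.castAdd k i)
            = (minPair (C.inType i) (s.inp i)).1 := Fin.append_left _ _ i
        rw [h1]
        exact minPair_fst_le (hr.1 i)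
      · have h1 : Fin.append (fun i => (minPair (C.inType i) (s.inp i)).1)
            (fun j => o (Fin.natAdd 1 j)) (Fin.natAdd 1 j') = o (Fin.natAdd 1 j') :=
          Fin.append_right _ _ j'
        rw [h1]
        exact le_refl _
  have hstep1 : Conn {t | Succ C s t} (mk ι' w) (mk (minI C s) w) := by
    rcases minPair_snd (hr.1 0) with hsnd | hsnd
    · have : ι' = minI C s := fun1_ext hsnd
      rw [this]
      exact Relation.ReflTransGen.refl
    · refine conn_single hmid (Or.inr (Or.inl ⟨Or.inl ?_, rfl, rfl⟩))
      exact hsnd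
  have hstep2 : Conn {t | Succ C s t} (mk (minI C s) w) (minSucc C s) := by
    refine hybrid_conn (minI C s) hwres (fun w' hw' => ?_)
    exact succ_mk C (readRel_min C s) hw'
  exact hstep1.trans hstep2

lemma conn_succs {s x y : CState 1 k 1} (hx : Succ C s x) (hy : Succ C s y) :
    Conn {t | Succ C s t} x y :=
  (conn_to_min C hx).trans (conn_symm (conn_to_min C hy) hy)

/-! ### Adjacent states have connected successors -/

lemma adj_lift_inp {u v : CState 1 k 1} (hmu : u.inp 0 = BM.metastable)
    (hloc : u.loc = v.loc) (hout : u.out = v.out) :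
    ∃ x y, Succ C u x ∧ Succ C v y ∧
      Conn ({t | Succ C u t} ∪ {t | Succ C v t}) x y := by
  set ιu : Fin 1 → BM := fun i => (pickPair (C.inType i) (v.inp i)).2 with hιu
  set ou : Fin (1 + k) → BM := Fin.append (fun i => (pickPair (C.inType i) (v.inp i)).1)
    (fun j => (minPair (C.locType j) (v.loc j)).1) with hou
  have hread : ReadRel C u ou ιu := by
    constructor
    · intro i
      have h1 : ou (Fin.castAdd k i) = (pickPair (C.inType i) (v.inp i)).1 :=
        Fin.append_left _ _ i
      show regRead _ _ (ou (Fin.castAdd k i), (pickPair (C.inType i) (v.inp i)).2)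
      rw [h1]
      have hi : u.inp i = BM.metastable := by
        have : i = 0 := Subsingleton.elim i 0
        rw [this]; exact hmu
      rw [hi]
      exact regRead_pickPair _ _
    · intro j
      refine ⟨(minPair (C.locType j) (v.loc j)).2, ?_⟩
      have h1 : ou (Fin.natAdd 1 j) = (minPair (C.locType j) (v.loc j)).1 :=
        Fin.append_right _ _ j
      rw [h1]
      have hj : u.loc j = v.loc j := by rw [hloc]
      rw [hj]
      exact regRead_minPair _ _
  have hle : leF ou (minO C v) := by
    intro j
    refine Fin.addCases (motive := fun j => le (ou j) (minO C v j)) (fun i => ?_) (fun j' => ?_) j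
    · have h1 : ou (Fin.castAdd k i) = (pickPair (C.inType i) (v.inp i)).1 :=
        Fin.append_left _ _ i
      have h2 : minO C v (Fin.castAdd k i) = (minPair (C.inType i) (v.inp i)).1 :=
        Fin.append_left _ _ i
      rw [h1, h2]
      exact pickPair_fst_le _ _
    · have h1 : ou (Fin.natAdd 1 j') = (minPair (C.locType j') (v.loc j')).1 :=
        Fin.append_right _ _ j'
      have h2 : minO C v (Fin.natAdd 1 j') = (minPair (C.locType j') (v.loc j')).1 :=
        Fin.append_right _ _ j'
      rw [h1, h2]
      exact le_refl _
  have hxsucc : Succ C u (mk ιu (minW C v)) :=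
    succ_mk C hread (inResM_of_leF (evalLogic_mono C hle))
  refine ⟨mk ιu (minW C v), minSucc C v, hxsucc, succ_minSucc C v, ?_⟩
  rcases pickPair_snd (C.inType 0) (v.inp 0) with hsnd | hsnd
  · have : ιu = minI C v := fun1_ext hsnd
    rw [this]
    exact Relation.ReflTransGen.refl
  · refine conn_single (Or.inr (succ_minSucc C v)) ?_
    exact Or.inr (Or.inl ⟨Or.inl hsnd, rfl, rfl⟩)

lemma adj_lift_loc {u v : CState 1 k 1} {j0 : Fin k} (hmu : u.loc j0 = BM.metastable)
    (hrest : ∀ j, j ≠ j0 → u.loc j = v.loc j) (hinp : u.inp = v.inp)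
    (hout : u.out = v.out) :
    ∃ x y, Succ C u x ∧ Succ C v y ∧
      Conn ({t | Succ C u t} ∪ {t | Succ C v t}) x y := by
  set ou : Fin (1 + k) → BM := Fin.append (fun i => (minPair (C.inType i) (v.inp i)).1)
    (fun j => if j = j0 then (pickPair (C.locType j0) (v.loc j0)).1
              else (minPair (C.locType j) (v.loc j)).1) with hou
  have hread : ReadRel C u ou (minI C v) := by
    constructor
    · intro i
      have h1 : ou (Fin.castAdd k i) = (minPair (C.inType i) (v.inp i)).1 :=
        Fin.append_left _ _ i
      show regRead _ _ (ou (Fin.castAdd k i), (minPair (C.inType i) (v.inp i)).2)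
      rw [h1]
      have hi : u.inp i = v.inp i := by rw [hinp]
      rw [hi]
      exact regRead_minPair _ _
    · intro j
      have h1 : ou (Fin.natAdd 1 j) = if j = j0 then (pickPair (C.locType j0) (v.loc j0)).1
          else (minPair (C.locType j) (v.loc j)).1 := Fin.append_right _ _ j
      by_cases hj : j = j0
      · subst hj
        refine ⟨(pickPair (C.locType j) (v.loc j)).2, ?_⟩
        rw [h1, if_pos rfl, hmu]
        exact regRead_pickPair _ _
      · refine ⟨(minPair (C.locType j) (v.loc j)).2, ?_⟩
        rw [h1, if_neg hj, hrest j hj]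
        exact regRead_minPair _ _
  have hle : leF ou (minO C v) := by
    intro j
    refine Fin.addCases (motive := fun j => le (ou j) (minO C v j)) (fun i => ?_) (fun j' => ?_) j
    · have h1 : ou (Fin.castAdd k i) = (minPair (C.inType i) (v.inp i)).1 :=
        Fin.append_left _ _ i
      have h2 : minO C v (Fin.castAdd k i) = (minPair (C.inType i) (v.inp i)).1 :=
        Fin.append_left _ _ i
      rw [h1, h2]
      exact le_refl _
    · have h1 : ou (Fin.natAdd 1 j') = if j' = j0 then (pickPair (C.locType j0) (v.loc j0)).1
          else (minPair (C.locType j') (v.loc j')).1 := Fin.append_right _ _ j'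
      have h2 : minO C v (Fin.natAdd 1 j') = (minPair (C.locType j') (v.loc j')).1 :=
        Fin.append_right _ _ j'
      rw [h1, h2]
      by_cases hj : j' = j0
      · subst hj
        rw [if_pos rfl]
        exact pickPair_fst_le _ _
      · rw [if_neg hj]
        exact le_refl _
  have hxsucc : Succ C u (minSucc C v) :=
    succ_mk C hread (inResM_of_leF (evalLogic_mono C hle))
  exact ⟨minSucc C v, minSucc C v, hxsucc, succ_minSucc C v, Relation.ReflTransGen.refl⟩

lemma adj_lift {u v : CState 1 k 1} (hA : A u v) :
    ∃ x y, Succ C u x ∧ Succ C v y ∧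
      Conn ({t | Succ C u t} ∪ {t | Succ C v t}) x y := by
  have triv : ∀ w : CState 1 k 1, ∃ x y, Succ C w x ∧ Succ C w y ∧
      Conn ({t | Succ C w t} ∪ {t | Succ C w t}) x y :=
    fun w => ⟨minSucc C w, minSucc C w, succ_minSucc C w, succ_minSucc C w,
      Relation.ReflTransGen.refl⟩
  have swap : ∀ {u v : CState 1 k 1},
      (∃ x y, Succ C v x ∧ Succ C u y ∧ Conn ({t | Succ C v t} ∪ {t | Succ C u t}) x y) →
      ∃ x y, Succ C u x ∧ Succ C v y ∧ Conn ({t | Succ C u t} ∪ {t | Succ C v t}) x y := by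
    intro u v ⟨x, y, hx, hy, hc⟩
    have hc' : Conn ({t | Succ C v t} ∪ {t | Succ C u t}) y x :=
      conn_symm hc (Or.inl hx)
    refine ⟨y, x, hy, hx, conn_mono ?_ hc'⟩
    rw [Set.union_comm]
  rcases hA with rfl | ⟨hm, hloc, hout⟩ | ⟨j0, hm, hrest, hinp, hout⟩ | ⟨hm, hinp, hloc⟩
  · exact triv u
  · by_cases h0 : u.inp 0 = v.inp 0
    · have : u = v := cext (fun1_ext h0) hloc hout
      subst this
      exact triv u
    · rcases hm with hm | hm
      · exact adj_lift_inp C hm hloc hout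
      · exact swap (adj_lift_inp C hm hloc.symm hout.symm)
  · by_cases h0 : u.loc j0 = v.loc j0
    · have hl : u.loc = v.loc := by
        funext j
        by_cases hj : j = j0
        · subst hj; exact h0
        · exact hrest j hj
      have : u = v := cext hinp hl hout
      subst this
      exact triv u
    · rcases hm with hm | hm
      · exact adj_lift_loc C hm hrest hinp hout
      · refine swap (adj_lift_loc C hm (fun j hj => (hrest j hj).symm) hinp.symm hout.symm)
  · -- outputs differ only: same successors
    have heq : minSucc C u = minSucc C v := minSucc_congr C hinp hloc
    refine ⟨minSucc C u, minSucc C v, succ_minSucc C u, succ_minSucc C v, ?_⟩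
    rw [heq]
    exact Relation.ReflTransGen.refl

/-! ### Reachability bookkeeping -/

def ι0 : Fin 1 → BM := fun _ => BM.zero
def ι1 : Fin 1 → BM := fun _ => BM.one
def ιM : Fin 1 → BM := fun _ => BM.metastable

def Rset (r : ℕ) : Set (CState 1 k 1) :=
  reach C r (initState C ι0) ∪ reach C r (initState C ιM) ∪ reach C r (initState C ι1)

lemma succ_subset {r : ℕ} {s : CState 1 k 1} (hs : s ∈ Rset C r) :
    {t | Succ C s t} ⊆ Rset C (r + 1) := by
  intro t ht
  rcases hs with (h | h) | h
  · exact Or.inl (Or.inl ⟨s, h, ht⟩)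
  · exact Or.inl (Or.inr ⟨s, h, ht⟩)
  · exact Or.inr ⟨s, h, ht⟩

lemma lift {r : ℕ} {a c : CState 1 k 1} (hconn : Conn (Rset C r) a c)
    (ha : a ∈ Rset C r) {x : CState 1 k 1} (hx : Succ C a x) :
    ∃ y, Succ C c y ∧ Conn (Rset C (r + 1)) x y := by
  induction hconn with
  | refl => exact ⟨x, hx, Relation.ReflTransGen.refl⟩
  | @tail c' c hac' hstep ih =>
      obtain ⟨y', hy', hconn'⟩ := ih
      have hc' : c' ∈ Rset C r := conn_mem hac' ha
      obtain ⟨p, q, hp, hq, hpq⟩ := adj_lift C hstep.2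
      have h1 : Conn (Rset C (r + 1)) y' p :=
        conn_mono (succ_subset C hc') (conn_succs C hy' hp)
      have h2 : Conn (Rset C (r + 1)) p q :=
        conn_mono (Set.union_subset (succ_subset C hc') (succ_subset C hstep.1)) hpq
      exact ⟨q, hq, hconn'.trans (h1.trans h2)⟩

lemma main : ∀ r : ℕ, ∃ a b, a ∈ reach C r (initState C ι0) ∧
    b ∈ reach C r (initState C ι1) ∧ Conn (Rset C r) a b := by
  intro r
  induction r with
  | zero =>
      refine ⟨initState C ι0, initState C ι1, rfl, rfl, ?_⟩
      have s1 : Conn (Rset C 0) (initState C ι0) (initState C ιM) := by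
        refine conn_single (Or.inl (Or.inr rfl)) ?_
        exact Or.inr (Or.inl ⟨Or.inr rfl, rfl, rfl⟩)
      have s2 : Conn (Rset C 0) (initState C ιM) (initState C ι1) := by
        refine conn_single (Or.inr rfl) ?_
        exact Or.inr (Or.inl ⟨Or.inl rfl, rfl, rfl⟩)
      exact s1.trans s2
  | succ r ih =>
      obtain ⟨a, b, ha, hb, hconn⟩ := ih
      obtain ⟨y, hy, hc⟩ := lift C hconn (Or.inl (Or.inl ha)) (succ_minSucc C a)
      exact ⟨minSucc C a, y, ⟨a, ha, succ_minSucc C a⟩, ⟨b, hb, hy⟩, hc⟩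

lemma out_const {R : Set (CState 1 k 1)} {a b : CState 1 k 1} (h : Conn R a b)
    (ha : a ∈ R) (hnm : ∀ s ∈ R, s.out 0 ≠ BM.metastable) : a.out 0 = b.out 0 := by
  induction h with
  | refl => rfl
  | @tail c b hac hcb ih =>
      have hc : c ∈ R := conn_mem hac ha
      rcases hcb.2 with rfl | ⟨_, _, h3⟩ | ⟨j, _, _, _, h4⟩ | ⟨hm, _, _⟩
      · exact ih
      · exact ih.trans (congrFun h3 0)
      · exact ih.trans (congrFun h4 0)
      · rcases hm with h | h
        · exact absurd h (hnm c hc)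
        · exact absurd h (hnm b hcb.1)

end NoResolve

/-- metastability cannot be resolved: no circuit implements
`f(M) = {0, 1}`, `f(x) = {x}` for `x ∈ {0,1}` (in any number `r ≥ 1` of rounds). -/
theorem no_metastability_resolver :
    ¬ ∃ (k r : ℕ) (C : Circuit 1 k 1), 0 < r ∧ Implements C r resolveSpec := by
  rintro ⟨k, r, C, hr, himpl⟩
  obtain ⟨a, b, ha, hb, hconn⟩ := NoResolve.main C r
  have hge0 : (NoResolve.ι0 : Fin 1 → BM) 0 = BM.zero := rfl
  have hspec0 : a.out = NoResolve.ι0 := by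
    have := himpl NoResolve.ι0 ⟨a, ha, rfl⟩
    rw [resolveSpec, if_neg (by rw [hge0]; exact fun h => BM.noConfusion h)] at this
    exact this
  have hspec1 : b.out = NoResolve.ι1 := by
    have := himpl NoResolve.ι1 ⟨b, hb, rfl⟩
    rw [resolveSpec, if_neg (show (NoResolve.ι1 : Fin 1 → BM) 0 ≠ BM.metastable from
      fun h => BM.noConfusion h)] at this
    exact this
  have hnm : ∀ s ∈ NoResolve.Rset C r, s.out 0 ≠ BM.metastable := by
    intro s hs
    rcases hs with (h | h) | h
    · have := himpl NoResolve.ι0 ⟨s, h, rfl⟩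
      rw [resolveSpec, if_neg (show (NoResolve.ι0 : Fin 1 → BM) 0 ≠ BM.metastable from
        fun h => BM.noConfusion h)] at this
      rw [this]
      exact fun h => BM.noConfusion h
    · have := himpl NoResolve.ιM ⟨s, h, rfl⟩
      rw [resolveSpec, if_pos (show (NoResolve.ιM : Fin 1 → BM) 0 = BM.metastable from rfl)] at this
      rcases this with h' | h'
      · rw [h']; exact fun h => BM.noConfusion h
      · rw [h']; exact fun h => BM.noConfusion h
    · have := himpl NoResolve.ι1 ⟨s, h, rfl⟩
      rw [resolveSpec, if_neg (show (NoResolve.ι1 : Fin 1 → BM) 0 ≠ BM.metastable from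
        fun h => BM.noConfusion h)] at this
      rw [this]
      exact fun h => BM.noConfusion h
  have hco := NoResolve.out_const hconn (Or.inl (Or.inl ha)) hnm
  rw [hspec0, hspec1] at hco
  exact BM.noConfusion hco
end

section
/- Circuits with only simple registers can be unrolled: given a circuit C all of whose registers are simple such that r ∈ N rounds of C implement a function f : BM^m → Pow(BM^n), there exists a circuit C' such that one round of C' implements f. -/
set_option linter.unusedVariables false

attribute [local instance] Classical.propDecidable

/-- Substitution of combinational logic into combinational logic. -/
def Comb.subst {m m' : ℕ} (σ : Fin m → Comb m') : Comb m → Comb m'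
  | .input i => σ i
  | .const b => .const b
  | .gate j f cs => .gate j f (fun t => Comb.subst σ (cs t))

lemma eval_subst {m m' : ℕ} (σ : Fin m → Comb m') (x : Fin m' → BM) :
    ∀ c : Comb m, (Comb.subst σ c).eval x = c.eval (fun i => (σ i).eval x)
  | .input i => rfl
  | .const b => rfl
  | .gate j f cs => by
      simp only [Comb.subst, Comb.eval]
      congr 1
      funext t
      exact eval_subst σ x (cs t)

/-- Canonical (no-resolution) values of the local registers after `t` rounds. -/
noncomputable def canLoc {m k n : ℕ} (C : Circuit m k n) (ι : Fin m → BM) :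
    ℕ → Fin k → BM
  | 0 => fun j => C.init (Fin.castAdd n j)
  | t + 1 => fun j => evalLogic C (Fin.append ι (canLoc C ι t)) (Fin.castAdd n j)

/-- Canonical values of the output registers after `t` rounds. -/
noncomputable def canOut {m k n : ℕ} (C : Circuit m k n) (ι : Fin m → BM) :
    ℕ → Fin n → BM
  | 0 => fun j => C.init (Fin.natAdd k j)
  | t + 1 => fun j => evalLogic C (Fin.append ι (canLoc C ι t)) (Fin.natAdd k j)

/-- Combinational logic computing the canonical local-register values. -/
def locIter {m k n : ℕ} (C : Circuit m k n) : ℕ → Fin k → Comb (m + k)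
  | 0 => fun j => .const (C.init (Fin.castAdd n j))
  | t + 1 => fun j =>
      Comb.subst
        (Fin.addCases (fun i => Comb.input (Fin.castAdd k i)) (locIter C t))
        (C.logic (Fin.castAdd n j))

/-- The substitution unrolling `t` rounds. -/
def sigmaC {m k n : ℕ} (C : Circuit m k n) (t : ℕ) : Fin (m + k) → Comb (m + k) :=
  Fin.addCases (fun i => Comb.input (Fin.castAdd k i)) (locIter C t)

lemma locIter_succ {m k n : ℕ} (C : Circuit m k n) (t : ℕ) (j : Fin k) :
    locIter C (t + 1) j = Comb.subst (sigmaC C t) (C.logic (Fin.castAdd n j)) := rfl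

lemma sigma_eval {m k n : ℕ} (C : Circuit m k n) (ι : Fin m → BM)
    (loc : Fin k → BM) (t : ℕ)
    (h : ∀ j, (locIter C t j).eval (Fin.append ι loc) = canLoc C ι t j) :
    (fun i => (sigmaC C t i).eval (Fin.append ι loc)) =
      Fin.append ι (canLoc C ι t) := by
  funext i
  refine Fin.addCases (fun i => ?_) (fun j => ?_) i
  · simp only [sigmaC, Fin.addCases_left, Comb.eval, Fin.append_left]
  · simp only [sigmaC, Fin.addCases_right, Fin.append_right]
    exact h j

lemma eval_locIter {m k n : ℕ} (C : Circuit m k n) (ι : Fin m → BM)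
    (loc : Fin k → BM) :
    ∀ t j, (locIter C t j).eval (Fin.append ι loc) = canLoc C ι t j
  | 0, j => rfl
  | t + 1, j => by
      rw [locIter_succ, eval_subst,
        sigma_eval C ι loc t (fun j' => eval_locIter C ι loc t j')]
      rfl

lemma eval_subst_sigma {m k n : ℕ} (C : Circuit m k n) (ι : Fin m → BM)
    (loc : Fin k → BM) (t : ℕ) (j : Fin (k + n)) :
    (Comb.subst (sigmaC C t) (C.logic j)).eval (Fin.append ι loc) =
      evalLogic C (Fin.append ι (canLoc C ι t)) j := by
  rw [eval_subst, sigma_eval C ι loc t (fun j' => eval_locIter C ι loc t j')]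
  rfl

lemma regRead_simple_eq {b : BM} {p : BM × BM} (h : regRead RegType.simple b p) :
    p = (b, b) := by
  cases b <;> simpa [regRead] using h

lemma regRead_simple (b : BM) : regRead RegType.simple b (b, b) := by
  cases b <;> simp [regRead]

lemma readRel_simple {m k n : ℕ} {C : Circuit m k n} (hC : OnlySimple C)
    {s : CState m k n} {o : Fin (m + k) → BM} {ι' : Fin m → BM}
    (h : ReadRel C s o ι') : o = Fin.append s.inp s.loc ∧ ι' = s.inp := by
  obtain ⟨h1, h2⟩ := h
  constructor
  · funext i
    refine Fin.addCases (fun i => ?_) (fun j => ?_) i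
    · have := h1 i
      rw [hC.1 i] at this
      have := regRead_simple_eq this
      rw [Fin.append_left]
      exact (congrArg Prod.fst this)
    · obtain ⟨st', hst'⟩ := h2 j
      rw [hC.2.1 j] at hst'
      have := regRead_simple_eq hst'
      rw [Fin.append_right]
      exact (congrArg Prod.fst this)
  · funext i
    have := h1 i
    rw [hC.1 i] at this
    exact (congrArg Prod.snd (regRead_simple_eq this))

lemma readRel_canonical {m k n : ℕ} {C : Circuit m k n} (hC : OnlySimple C)
    (s : CState m k n) : ReadRel C s (Fin.append s.inp s.loc) s.inp := by
  constructor
  · intro i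
    rw [hC.1 i, Fin.append_left]
    exact regRead_simple _
  · intro j
    refine ⟨s.loc j, ?_⟩
    rw [hC.2.1 j, Fin.append_right]
    exact regRead_simple _

lemma inResM_refl {k : ℕ} (x : Fin k → BM) : inResM x x := fun _ => Or.inl rfl

lemma canReach {m k n : ℕ} (C : Circuit m k n) (hC : OnlySimple C)
    (ι : Fin m → BM) :
    ∀ t, (⟨ι, canLoc C ι t, canOut C ι t⟩ : CState m k n) ∈
      reach C t (initState C ι)
  | 0 => rfl
  | t + 1 => by
      refine ⟨_, canReach C hC ι t, ?_⟩
      refine ⟨Fin.append ι (canLoc C ι t), ι, readRel_canonical hC _, rfl, ?_⟩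
      intro i
      left
      refine Fin.addCases (fun j => ?_) (fun j => ?_) i
      · rw [Fin.append_left]; rfl
      · rw [Fin.append_right]; rfl

/-- circuits with only simple registers can be unrolled: if `r ∈ ℕ`
rounds of a circuit `C` with only simple registers implement `f`, then some circuit
`C'` implements `f` in one round. -/
theorem unroll_simple_circuits {m n : ℕ} (r k : ℕ) (hr : 0 < r)
    (C : Circuit m k n) (hC : OnlySimple C)
    (f : (Fin m → BM) → Set (Fin n → BM)) (hf : Implements C r f) :
    ∃ k' : ℕ, ∃ C' : Circuit m k' n, Implements C' 1 f := by
  obtain ⟨r', rfl⟩ : ∃ r', r = r' + 1 :=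
    ⟨r - 1, (Nat.succ_pred_eq_of_pos hr).symm⟩
  refine ⟨k, ⟨fun _ => RegType.simple, fun _ => RegType.simple,
    fun _ => RegType.simple,
    fun j => Comb.subst (sigmaC C r') (C.logic j), C.init⟩, ?_⟩
  set C' : Circuit m k n := ⟨fun _ => RegType.simple, fun _ => RegType.simple,
    fun _ => RegType.simple,
    fun j => Comb.subst (sigmaC C r') (C.logic j), C.init⟩ with hC'def
  intro ι y hy
  obtain ⟨s, hs, rfl⟩ := hy
  obtain ⟨u, hu, hSucc⟩ := hs
  have hu' : u = initState C' ι := hu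
  subst hu'
  obtain ⟨o, ι', hRead, hinp, hw⟩ := hSucc
  have hCS' : OnlySimple C' := ⟨fun _ => rfl, fun _ => rfl, fun _ => rfl⟩
  obtain ⟨ho, hι'⟩ := readRel_simple hCS' hRead
  -- evaluate the unrolled logic
  have heval : ∀ j, evalLogic C' o j =
      evalLogic C (Fin.append ι (canLoc C ι r')) j := by
    intro j
    rw [ho]
    exact eval_subst_sigma C ι _ r' j
  -- construct the final state in C
  apply hf ι
  refine ⟨⟨ι, canLoc C ι (r' + 1), s.out⟩, ?_, rfl⟩
  refine ⟨_, canReach C hC ι r', ?_⟩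
  refine ⟨Fin.append ι (canLoc C ι r'), ι, readRel_canonical hC _, rfl, ?_⟩
  intro i
  refine Fin.addCases (fun j => ?_) (fun j => ?_) i
  · left; rw [Fin.append_left]; rfl
  · have := hw (Fin.natAdd k j)
    rw [heval (Fin.natAdd k j), Fin.append_right] at this
    rw [Fin.append_right]
    exact this
end
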